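/- If ∫_ℝ |g(k)| dk ≤ 2π · exp(α), then for every t ≥ 0 and all x, p ∈ ℝ the (real) value f(t,x,p) is nonnegative: f(t,x,p) ≥ 0. -/

import Mathlib

open MeasureTheory

/-- Relativistic energy `ε(p) = √(m² + p²)`. -/
noncomputable def eps (m p : ℝ) : ℝ := Real.sqrt (m ^ 2 + p ^ 2)

/-- The distribution function
`f(t,x,p) = exp(α − β ε(p)) + (1/2π) ∫ g(k) exp(−β ε(p) − i β 𝔇 k p + i k x − 𝔇 k² t) dk`. -/
noncomputable def fdist (m β D α : ℝ) (g : ℝ → ℂ) (t x p : ℝ) : ℂ :=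
  Complex.exp (↑(α - β * eps m p)) +
    (2 * Real.pi)⁻¹ * ∫ k : ℝ, g k * Complex.exp (-(↑(β * eps m p))
      - Complex.I * ↑(β * D * k * p) + Complex.I * ↑(k * x) - ↑(D * k ^ 2 * t))

/-- if `∫ |g(k)| dk ≤ 2π exp(α)`, then for every `t ≥ 0` and all `x, p` the
(real) value `f(t,x,p)` is nonnegative. -/
theorem fdist_nonneg (m β D α : ℝ) (hm : 0 < m) (hβ : 0 < β) (hD : 0 < D)
    (g : SchwartzMap ℝ ℂ) (hg : ∀ k : ℝ, g (-k) = (starRingEnd ℂ) (g k))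
    (hL1 : (∫ k : ℝ, ‖g k‖) ≤ 2 * Real.pi * Real.exp α)
    (t x p : ℝ) (ht : 0 ≤ t) :
    0 ≤ (fdist m β D α (⇑g) t x p).re ∧ (fdist m β D α (⇑g) t x p).im = 0 := by
  set c : ℝ := β * eps m p with hc
  set F : ℝ → ℂ := fun k => g k * Complex.exp (-(↑c : ℂ)
      - Complex.I * ↑(β * D * k * p) + Complex.I * ↑(k * x) - ↑(D * k ^ 2 * t)) with hF
  have hexp_re : ∀ k : ℝ, ((-(↑c : ℂ) - Complex.I * ↑(β * D * k * p)
      + Complex.I * ↑(k * x) - ↑(D * k ^ 2 * t)).re) = -c - D * k ^ 2 * t := by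
    intro k; simp; left; left; norm_cast
  have hnorm : ∀ k : ℝ, ‖F k‖ ≤ ‖g k‖ * Real.exp (-c) := by
    intro k
    rw [hF]
    simp only [norm_mul, Complex.norm_exp, hexp_re]
    exact mul_le_mul_of_nonneg_left
      (Real.exp_le_exp.mpr (by nlinarith [mul_nonneg (mul_nonneg hD.le (sq_nonneg k)) ht])) (norm_nonneg _)
  have hcont : Continuous F := by
    apply g.continuous.mul
    apply Complex.continuous_exp.comp
    fun_prop
  have hgInt : Integrable (fun k : ℝ => ‖g k‖) := g.integrable.norm
  have hInt : Integrable F := by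
    refine (hgInt.mul_const (Real.exp (-c))).mono' hcont.aestronglyMeasurable ?_
    exact Filter.Eventually.of_forall hnorm
  -- the integral is real
  have key : ∀ k : ℝ, (starRingEnd ℂ) (F (-k)) = F k := by
    intro k
    rw [hF]
    simp only [map_mul, hg, RingHomCompTriple.comp_apply, RingHom.id_apply,
      Complex.conj_conj, ← Complex.exp_conj]
    congr 2
    simp only [map_sub, map_add, map_neg, map_mul, Complex.conj_ofReal, Complex.conj_I]
    push_cast
    ring
  have hconjI : (starRingEnd ℂ) (∫ k : ℝ, F k) = ∫ k : ℝ, F k := by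
    rw [← integral_conj]
    calc (∫ k : ℝ, (starRingEnd ℂ) (F k))
        = ∫ k : ℝ, (starRingEnd ℂ) (F (-k)) := (integral_neg_eq_self _ _).symm
      _ = ∫ k : ℝ, F k := by simp only [key]
  have hIm : (∫ k : ℝ, F k).im = 0 := Complex.conj_eq_iff_im.mp hconjI
  -- norm bound
  have hbound : ‖∫ k : ℝ, F k‖ ≤ 2 * Real.pi * Real.exp (α - c) := by
    calc ‖∫ k : ℝ, F k‖ ≤ ∫ k : ℝ, ‖F k‖ := norm_integral_le_integral_norm _
      _ ≤ ∫ k : ℝ, ‖g k‖ * Real.exp (-c) :=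
          integral_mono hInt.norm (hgInt.mul_const _) hnorm
      _ = (∫ k : ℝ, ‖g k‖) * Real.exp (-c) := integral_mul_const _ _
      _ ≤ (2 * Real.pi * Real.exp α) * Real.exp (-c) :=
          mul_le_mul_of_nonneg_right hL1 (Real.exp_nonneg _)
      _ = 2 * Real.pi * Real.exp (α - c) := by
          rw [mul_assoc, ← Real.exp_add, ← sub_eq_add_neg]
  have hpi : (0:ℝ) < 2 * Real.pi := by positivity
  have hre : |(∫ k : ℝ, F k).re| ≤ 2 * Real.pi * Real.exp (α - c) :=
    le_trans (Complex.abs_re_le_norm _) hbound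
  have hfd : fdist m β D α (⇑g) t x p
      = Complex.exp (↑(α - c)) + (2 * Real.pi)⁻¹ * ∫ k : ℝ, F k := rfl
  rw [hfd, ← Complex.ofReal_exp]
  constructor
  · simp only [Complex.add_re, Complex.mul_re, Complex.ofReal_re, Complex.ofReal_im,
      zero_mul, sub_zero]
    have h1 : (2 * Real.pi)⁻¹ * |(∫ k : ℝ, F k).re| ≤ Real.exp (α - c) := by
      rw [inv_mul_le_iff₀ hpi]
      linarith [hre]
    have h2 := neg_abs_le ((∫ k : ℝ, F k).re)
    nlinarith [abs_nonneg ((∫ k : ℝ, F k).re), inv_pos.mpr hpi]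
  · simp only [Complex.add_im, Complex.mul_im, Complex.ofReal_im, Complex.ofReal_re,
      hIm, zero_add, zero_mul, mul_zero, add_zero]
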